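/- Let Q ⊆ S_Q^{d-1} be quasistable for range R, let W ⊆ Q, and let w ∈ L_R with w ∈ W^⊥. Then P(W,w) = ∪_{λ∈[0,1]} (P(W) + λw). -/

import Mathlib

open scoped InnerProductSpace ENNReal Classical
open MeasureTheory

noncomputable section

namespace BootstrapU

/-- Euclidean space `ℝ^d`. -/
abbrev E (d : ℕ) : Type := EuclideanSpace ℝ (Fin d)

/-- The embedding of the lattice `ℤ^d` into `ℝ^d`. -/
def toE {d : ℕ} (v : Fin d → ℤ) : E d :=
  (EuclideanSpace.equiv (Fin d) ℝ).symm fun i => (v i : ℝ)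

/-- The unit sphere `S^{d-1}` of `ℝ^d`. -/
def unitSphere (d : ℕ) : Set (E d) := Metric.sphere 0 1

/-- The rational directions of the sphere: unit vectors whose line meets `ℤ^d ∖ {0}`. -/
def ratSphere (d : ℕ) : Set (E d) :=
  {w | w ∈ unitSphere d ∧ ∃ x : Fin d → ℤ, x ≠ 0 ∧ ∃ c : ℝ, toE x = c • w}

/-- `L_R`: vectors lying on a line spanned by a non-zero integer vector of norm at most `R`. -/
def LR (d : ℕ) (R : ℝ) : Set (E d) :=
  {w | ∃ x : Fin d → ℤ, x ≠ 0 ∧ ‖toE x‖ ≤ R ∧ ∃ c : ℝ, w = c • toE x}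

/-- One step of the bootstrap process with rules `Us`. -/
def bstep {G : Type*} [AddCommGroup G] (Us : Set (Finset G)) (A : Set G) : Set G :=
  A ∪ {x | ∃ X ∈ Us, ∀ y ∈ X, x + y ∈ A}

/-- The closure `[A]` of the bootstrap process with rules `Us`. -/
def bclosure {G : Type*} [AddCommGroup G] (Us : Set (Finset G)) (A : Set G) : Set G :=
  ⋃ t : ℕ, (bstep Us)^[t] A

/-- A `d`-dimensional update family: a finite collection of finite non-empty subsets of
`ℤ^d ∖ {0}`. -/
def IsUpdateFamily {d : ℕ} (U : Finset (Finset (Fin d → ℤ))) : Prop :=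
  ∀ X ∈ U, X.Nonempty ∧ (0 : Fin d → ℤ) ∉ X

/-- The update rules reduced modulo `n`, acting on the torus `(ℤ/nℤ)^d`. -/
def torusRules (d n : ℕ) (U : Finset (Finset (Fin d → ℤ))) : Set (Finset (Fin d → ZMod n)) :=
  ↑(U.image fun X => X.image fun v i => (v i : ZMod n))

/-- The Bernoulli product measure with density `p`, on subsets of `ι` encoded as
indicator functions `ι → Bool`: the unique probability measure giving each finite
cylinder event its product probability. -/
def bernoulliP (ι : Type*) (p : ℝ) : Measure (ι → Bool) :=
  if h : ∃ μ : Measure (ι → Bool), IsProbabilityMeasure μ ∧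
      ∀ (s : Finset ι) (f : ι → Bool),
        μ {ω | ∀ i ∈ s, ω i = f i} =
          ∏ i ∈ s, (if f i then ENNReal.ofReal p else ENNReal.ofReal (1 - p))
  then h.choose else 0

/-- The probability that a `p`-random subset of the torus `(ℤ/nℤ)^d` percolates. -/
def percTorus (d n : ℕ) (U : Finset (Finset (Fin d → ℤ))) (p : ℝ) : ℝ≥0∞ :=
  bernoulliP (Fin d → ZMod n) p
    {ω | bclosure (torusRules d n U) {x | ω x = true} = Set.univ}

/-- The critical probability `p_c((ℤ/nℤ)^d, U)`. -/
def pcTorus (d n : ℕ) (U : Finset (Finset (Fin d → ℤ))) : ℝ :=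
  sInf {p : ℝ | 0 < p ∧ p ≤ 1 ∧ 1 / 2 ≤ percTorus d n U p}

/-- The probability that a `p`-random subset of `ℤ^d` percolates. -/
def percZ (d : ℕ) (U : Finset (Finset (Fin d → ℤ))) (p : ℝ) : ℝ≥0∞ :=
  bernoulliP (Fin d → ℤ) p
    {ω | bclosure (↑U : Set (Finset (Fin d → ℤ))) {x | ω x = true} = Set.univ}

/-- The critical probability `p_c(ℤ^d, U)`. -/
def pcZ (d : ℕ) (U : Finset (Finset (Fin d → ℤ))) : ℝ :=
  sInf {p : ℝ | 0 < p ∧ p ≤ 1 ∧ 1 / 2 ≤ percZ d U p}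

/-- The discrete half-space `H_u ⊆ ℤ^d`. -/
def halfLat {d : ℕ} (u : E d) : Set (Fin d → ℤ) := {x | ⟪toE x, u⟫_ℝ < 0}

/-- The stable set `S(U)` of an update family. -/
def stableSet (d : ℕ) (U : Finset (Finset (Fin d → ℤ))) : Set (E d) :=
  {u | u ∈ unitSphere d ∧
    bclosure (↑U : Set (Finset (Fin d → ℤ))) (halfLat u) = halfLat u}

/-- The centre of a sphere embedded in the unit sphere: the unique point of the affine
span of `S` equidistant from all points of `S`. -/
def sphCenter {d : ℕ} (S : Set (E d)) : E d :=
  if h : ∃ c : E d, c ∈ affineSpan ℝ S ∧ ∃ r : ℝ, ∀ x ∈ S, dist x c = r then h.choose else 0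

/-- The sphere `S_η(S, u) = {v ∈ S : ‖u - v‖ = η}`. -/
def sSphere {d : ℕ} (S : Set (E d)) (u : E d) (η : ℝ) : Set (E d) :=
  {v | v ∈ S ∧ ‖u - v‖ = η}

/-- `S` is a `k`-dimensional sphere of positive radius embedded in the unit sphere:
the intersection of `S^{d-1}` with a `(k+1)`-dimensional affine subspace. -/
def IsEmbSphere (d k : ℕ) (S : Set (E d)) : Prop :=
  ∃ A : AffineSubspace ℝ (E d), Module.finrank ℝ A.direction = k + 1 ∧
    (∃ y ∈ A, ‖y‖ < 1) ∧ S = ↑A ∩ unitSphere d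

/-- `H` is an open hemisphere of the sphere `S`: the intersection of `S` with an open
half-space whose boundary hyperplane contains the centre of `S`. -/
def IsOpenHemi {d : ℕ} (S H : Set (E d)) : Prop :=
  ∃ u : E d, u ≠ 0 ∧ u ∈ (affineSpan ℝ S).direction ∧
    H = {x | x ∈ S ∧ 0 < ⟪x - sphCenter S, u⟫_ℝ}

/-- `T` is an `S`-stable set: `T ∩ S` is a finite intersection of finite unions of
closed hemispheres of `S`. -/
def IsStableIn {d : ℕ} (S T : Set (E d)) : Prop :=
  ∃ (m : ℕ) (Y : Fin m → Finset (E d)),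
    (∀ i, ∀ y ∈ Y i, y ≠ 0 ∧ y ∈ (affineSpan ℝ S).direction) ∧
    T ∩ S = S ∩ ⋂ i, ⋃ y ∈ Y i, {x | 0 ≤ ⟪x - sphCenter S, y⟫_ℝ}

/-- Two subsets of `ℝ^d` are equivalent if one is the image of the other under a
composition of translations, dilations and rotations. -/
def SimEquiv {d : ℕ} (A B : Set (E d)) : Prop :=
  ∃ (c : ℝ) (O : E d ≃ₗᵢ[ℝ] E d) (b : E d), 0 < c ∧
    LinearMap.det O.toLinearEquiv.toLinearMap = 1 ∧
    B = (fun x => c • O x + b) '' A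

/-- Given a function `r` on spheres, `rhoAux r S T u` is the eventual value of
`r (S_η(S,u)) T` for all sufficiently small `η > 0` if `u ∈ T` (and this eventual
value exists), and `0` otherwise. -/
def rhoAux {d : ℕ} (r : Set (E d) → Set (E d) → ℕ) (S T : Set (E d)) (u : E d) : ℕ :=
  if u ∈ T then
    (if h : ∃ n : ℕ, ∃ η0 : ℝ, 0 < η0 ∧ ∀ η : ℝ, 0 < η → η < η0 → r (sSphere S u η) T = n
      then h.choose else 0)
  else 0

/-- The resistance function `r^k`, applied to `(k-1)`-dimensional spheres `S` and
`S`-stable sets `T`. -/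
def resR (d : ℕ) : ℕ → Set (E d) → Set (E d) → ℕ
  | 0, _, _ => 1
  | k + 1, S, T =>
      sInf {n : ℕ | ∃ H : Set (E d), IsOpenHemi S H ∧
        n = sSup {m : ℕ | ∃ u ∈ H, m = rhoAux (resR d k) S T u} + 1}

/-- The induced resistance `ρ^k`, applied to `k`-dimensional spheres `S`, `S`-stable
sets `T` and `u ∈ S`. -/
def resRho (d k : ℕ) (S T : Set (E d)) (u : E d) : ℕ := rhoAux (resR d k) S T u

/-- The resistance `r(U) = r^d(S^{d-1}; S(U))` of an update family. -/
def resistance (d : ℕ) (U : Finset (Finset (Fin d → ℤ))) : ℕ :=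
  resR d d (unitSphere d) (stableSet d U)

/-- The open hemisphere of `S^{d-1}` with pole `u`. -/
def openHemi (d : ℕ) (u : E d) : Set (E d) := {v | v ∈ unitSphere d ∧ 0 < ⟪v, u⟫_ℝ}

/-- The closed hemisphere of `S^{d-1}` with pole `u`. -/
def closedHemi (d : ℕ) (u : E d) : Set (E d) := {v | v ∈ unitSphere d ∧ 0 ≤ ⟪v, u⟫_ℝ}

/-- The interior of a subset of the sphere `S^{d-1}`, in the topology of the sphere. -/
def sphInt (d : ℕ) (T : Set (E d)) : Set (E d) :=
  {u | u ∈ unitSphere d ∧ ∃ ε : ℝ, 0 < ε ∧ ∀ v ∈ unitSphere d, dist v u < ε → v ∈ T}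

/-- `U` is supercritical: some open hemisphere misses the stable set. -/
def Supercritical (d : ℕ) (U : Finset (Finset (Fin d → ℤ))) : Prop :=
  ∃ u ∈ unitSphere d, openHemi d u ∩ stableSet d U = ∅

/-- `U` is critical: some closed hemisphere meets the stable set in a set with empty
interior, and every open hemisphere meets the stable set. -/
def Critical (d : ℕ) (U : Finset (Finset (Fin d → ℤ))) : Prop :=
  (∃ u ∈ unitSphere d, sphInt d (closedHemi d u ∩ stableSet d U) = ∅) ∧
    ∀ u ∈ unitSphere d, (openHemi d u ∩ stableSet d U).Nonempty

/-- `U` is subcritical: every closed hemisphere meets the stable set in a set with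
non-empty interior. -/
def Subcritical (d : ℕ) (U : Finset (Finset (Fin d → ℤ))) : Prop :=
  ∀ u ∈ unitSphere d, (sphInt d (closedHemi d u ∩ stableSet d U)).Nonempty

/-- The iterated logarithm: `iterLog 0 x = x` and `iterLog (r+1) x = log (iterLog r x)`. -/
def iterLog : ℕ → ℝ → ℝ
  | 0, x => x
  | r + 1, x => Real.log (iterLog r x)

/-- The stable set `S(F)` of a general finite collection of finite subsets of `ℤ^d`. -/
def famStable (d : ℕ) (F : Finset (Finset (Fin d → ℤ))) : Set (E d) :=
  {u | u ∈ unitSphere d ∧ ∀ X ∈ F, ∃ x ∈ X, 0 ≤ ⟪toE x, u⟫_ℝ}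

/-- The span `⟨F⟩` of a family: the span of the union of its rules. -/
def famSpan (d : ℕ) (F : Finset (Finset (Fin d → ℤ))) : Submodule ℝ (E d) :=
  Submodule.span ℝ {y | ∃ X ∈ F, ∃ x ∈ X, y = toE x}

/-- The induced family `F[W] = {X ∩ W^⊥ : X ∈ F, X ⊆ H(W)}`. -/
def induced (d : ℕ) (F : Finset (Finset (Fin d → ℤ))) (W : Set (E d)) :
    Finset (Finset (Fin d → ℤ)) :=
  (F.filter fun X => ∀ x ∈ X, ∀ u ∈ W, ⟪toE x, u⟫_ℝ ≤ 0).image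
    fun X => X.filter fun x => ∀ u ∈ W, ⟪toE x, u⟫_ℝ = 0

/-- The sphere `S(W) = S^{d-1} ∩ W^⊥`. -/
def sphereOf (d : ℕ) (W : Set (E d)) : Set (E d) :=
  {x | x ∈ unitSphere d ∧ x ∈ (Submodule.span ℝ W)ᗮ}

/-- The projection `π(u, W^⊥)`: the unique `v ∈ S(W)` such that `u = w + λ • v` with
`w ∈ span W` and `λ > 0`. -/
def projDir {d : ℕ} (W : Set (E d)) (u : E d) : E d :=
  if h : ∃ v : E d, v ∈ sphereOf d W ∧
      ∃ w ∈ Submodule.span ℝ W, ∃ lam : ℝ, 0 < lam ∧ u = w + lam • v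
  then h.choose else 0

/-- The Voronoi cell of `u` with respect to the finite set `Q ⊆ S^{d-1}`. -/
def cellOf {d : ℕ} (Q : Finset (E d)) (u : E d) : Set (E d) :=
  {w | w ∈ unitSphere d ∧ ∀ v ∈ Q, ⟪v, w⟫_ℝ ≤ ⟪u, w⟫_ℝ}

/-- `Q` is quasistable for range `R`. -/
def IsQuasistable (d : ℕ) (R : ℝ) (Q : Finset (E d)) : Prop :=
  ↑Q ⊆ ratSphere d ∧
  (∀ u ∈ unitSphere d, ∃ q ∈ Q, 0 < ⟪q, u⟫_ℝ) ∧
  ∀ u ∈ Q, ∀ w ∈ LR d R,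
    ((cellOf Q u ∩ {x | ⟪x, w⟫_ℝ = 0}).Nonempty ↔ ⟪u, w⟫_ℝ = 0)

/-- The polytope `P(W)` determined by the quasistable set `Q`. -/
def polyP (d : ℕ) (Q : Finset (E d)) (W : Set (E d)) : Set (E d) :=
  {x | (∀ u ∈ Q, ⟪x, u⟫_ℝ ≤ 1) ∧ ∀ u ∈ W, ⟪x, u⟫_ℝ = 1}

/-- The stretched (tubular) polytope `P(W, w)`. -/
def polyPw (d : ℕ) (Q : Finset (E d)) (W : Set (E d)) (w : E d) : Set (E d) :=
  {x | (∀ u ∈ Q, ⟪x - (if 0 ≤ ⟪u, w⟫_ℝ then w else 0), u⟫_ℝ ≤ 1) ∧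
    ∀ u ∈ W, ⟪x - (if 0 ≤ ⟪u, w⟫_ℝ then w else 0), u⟫_ℝ = 1}

/-- The buffer `E(H)` of a subspace `H` with respect to the sphere `S` and radii `del`,
where `del (i+1)` is the radius `δ_i` used for subspaces of dimension `i+1`, and the
buffer of the zero subspace is empty. -/
def buffer {m : ℕ} (S : Set (E m)) (del : ℕ → ℝ) (H : Submodule ℝ (E m)) : Set (E m) :=
  if Module.finrank ℝ H = 0 then ∅
  else {z | z ∈ S ∧ Metric.infDist z (H : Set (E m)) < del (Module.finrank ℝ H)}

/-- The expanded buffer `E⁺(H)`. -/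
def expBuffer {m : ℕ} (S : Set (E m)) (del : ℕ → ℝ) (H : Submodule ℝ (E m)) : Set (E m) :=
  if Module.finrank ℝ H = 0 then ∅
  else {z | z ∈ S ∧ Metric.infDist z (H : Set (E m)) < 3 * del (Module.finrank ℝ H)}

/-- `(ℝ^{k+1}, S, Hs, del)` is a spherical buffer system, where `del j` denotes `δ_{j-1}`
(so `del 0 = δ_{-1}` is the radius of `S`). -/
def IsSBS (k : ℕ) (S : Set (E (k + 1))) (Hs : Finset (Submodule ℝ (E (k + 1))))
    (del : ℕ → ℝ) : Prop :=
  0 < del 0 ∧ S = Metric.sphere 0 (del 0) ∧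
  (∀ H ∈ Hs, H ≠ ⊤) ∧ (∀ H ∈ Hs, ∀ H' ∈ Hs, H ⊓ H' ∈ Hs) ∧
  ∀ i < k, 0 < del (i + 1) ∧ del (i + 1) < del i / 3

/-- The set `Q̄(B)` of a spherical buffer system. -/
def QbarSBS (k : ℕ) (S : Set (E (k + 1))) (Hs : Finset (Submodule ℝ (E (k + 1))))
    (del : ℕ → ℝ) : Set (E (k + 1)) :=
  S ∩ ⋃ H ∈ insert (⊤ : Submodule ℝ (E (k + 1))) Hs,
    ((H : Set (E (k + 1))) \ ⋃ H' ∈ Hs, ⋃ (_ : H' < H), buffer S del H')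

/-- A good spherical buffer system. -/
def IsGoodSBS (k : ℕ) (S : Set (E (k + 1))) (Hs : Finset (Submodule ℝ (E (k + 1))))
    (del : ℕ → ℝ) : Prop :=
  IsSBS k S Hs del ∧
  ∀ H ∈ Hs, ∀ H' ∈ Hs, ¬H ≤ H' → ¬H' ≤ H →
    expBuffer S del H ∩ expBuffer S del H' ⊆ buffer S del (H ⊓ H')

/-- The set `{±e_1, …, ±e_d} ⊆ ℤ^d`. -/
def basisPM (d : ℕ) : Finset (Fin d → ℤ) :=
  (Finset.univ.image fun i : Fin d => Pi.single i (1 : ℤ)) ∪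
    (Finset.univ.image fun i : Fin d => Pi.single i (-1 : ℤ))

/-- The `r`-neighbour update family `N_r^d`. -/
def Nrd (d r : ℕ) : Finset (Finset (Fin d → ℤ)) :=
  (basisPM d).powerset.filter fun X => X.card = r

private lemma inner_sub_smul_expand {d : ℕ} (x w u : E d) (c : ℝ) :
    ⟪x - c • w, u⟫_ℝ = ⟪x, u⟫_ℝ - c * ⟪w, u⟫_ℝ := by
  rw [inner_sub_left, real_inner_smul_left]

/-- Key compatibility lemma: for `x ∈ P(W,w)`, the lower bounds on `λ` coming from
constraints with `⟪w,u⟫ > 0` are at most the upper bounds from `⟪w,v⟫ < 0`. -/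
private lemma tube_key (d : ℕ) (R : ℝ) (Q : Finset (E d)) (hQ : IsQuasistable d R Q)
    (W : Set (E d)) (w : E d) (hw : w ∈ LR d R)
    (x : E d) (hx : x ∈ polyPw d Q W w) (u : E d) (hu : u ∈ Q) (v : E d) (hv : v ∈ Q)
    (hwu : 0 < ⟪w, u⟫_ℝ) (hwv : ⟪w, v⟫_ℝ < 0) :
    (⟪x, u⟫_ℝ - 1) / ⟪w, u⟫_ℝ ≤ (⟪x, v⟫_ℝ - 1) / ⟪w, v⟫_ℝ := by
  by_contra hcon
  push_neg at hcon
  set au := (⟪x, u⟫_ℝ - 1) / ⟪w, u⟫_ℝ with hau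
  set bv := (⟪x, v⟫_ℝ - 1) / ⟪w, v⟫_ℝ with hbv
  set lam := (au + bv) / 2 with hlam
  have hlam1 : lam < au := by rw [hlam]; linarith
  have hlam2 : bv < lam := by rw [hlam]; linarith
  set y := x - lam • w with hy
  have hyu : 1 < ⟪y, u⟫_ℝ := by
    have h1 : lam * ⟪w, u⟫_ℝ < ⟪x, u⟫_ℝ - 1 := (lt_div_iff₀ hwu).mp hlam1
    rw [hy, inner_sub_smul_expand]; linarith
  have hyv : 1 < ⟪y, v⟫_ℝ := by
    have h1 : lam * ⟪w, v⟫_ℝ < ⟪x, v⟫_ℝ - 1 := (div_lt_iff_of_neg hwv).mp hlam2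
    rw [hy, inner_sub_smul_expand]; linarith
  have hw0 : w ≠ 0 := by
    intro h0; rw [h0] at hwu; simp at hwu
  set t := ⟪y, w⟫_ℝ / ‖w‖ ^ 2 with ht
  set y₁ := y - t • w with hy₁
  have hnw : ‖w‖ ^ 2 ≠ 0 := pow_ne_zero 2 (norm_ne_zero_iff.mpr hw0)
  have h_orth : ⟪y₁, w⟫_ℝ = 0 := by
    rw [hy₁, inner_sub_left, real_inner_smul_left, real_inner_self_eq_norm_sq, ht]
    field_simp
    ring
  have h2 : 1 < ⟪y₁, u⟫_ℝ ∨ 1 < ⟪y₁, v⟫_ℝ := by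
    rcases le_or_gt t 0 with h | h
    · left; rw [hy₁, inner_sub_smul_expand]; nlinarith
    · right; rw [hy₁, inner_sub_smul_expand]; nlinarith
  obtain ⟨q, hq, hqmax⟩ := Q.exists_max_image (fun p => ⟪p, y₁⟫_ℝ) ⟨u, hu⟩
  have hq1 : 1 < ⟪q, y₁⟫_ℝ := by
    rcases h2 with h | h
    · calc 1 < ⟪y₁, u⟫_ℝ := h
        _ = ⟪u, y₁⟫_ℝ := real_inner_comm _ _
        _ ≤ ⟪q, y₁⟫_ℝ := hqmax u hu
    · calc 1 < ⟪y₁, v⟫_ℝ := h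
        _ = ⟪v, y₁⟫_ℝ := real_inner_comm _ _
        _ ≤ ⟪q, y₁⟫_ℝ := hqmax v hv
  have hy₁ne : y₁ ≠ 0 := by
    intro h0; rw [h0, inner_zero_right] at hq1; linarith
  have hny₁ : (0 : ℝ) < ‖y₁‖ := norm_pos_iff.mpr hy₁ne
  set z := ‖y₁‖⁻¹ • y₁ with hz
  have hzs : z ∈ unitSphere d := by
    simp only [unitSphere, Metric.mem_sphere, dist_zero_right, hz, norm_smul,
      norm_inv, norm_norm]
    field_simp
  have hzcell : z ∈ cellOf Q q := by
    refine ⟨hzs, fun p hp => ?_⟩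
    rw [hz, real_inner_smul_right, real_inner_smul_right]
    exact mul_le_mul_of_nonneg_left (hqmax p hp) (by positivity)
  have hzw : ⟪z, w⟫_ℝ = 0 := by
    rw [hz, real_inner_smul_left, h_orth, mul_zero]
  have hqw : ⟪q, w⟫_ℝ = 0 :=
    (hQ.2.2 q hq w hw).mp ⟨z, hzcell, hzw⟩
  have hwq : ⟪w, q⟫_ℝ = 0 := by rw [real_inner_comm]; exact hqw
  have hxq : ⟪x, q⟫_ℝ ≤ 1 := by
    have := hx.1 q hq
    rw [if_pos (le_of_eq hqw.symm), inner_sub_left, hwq, sub_zero] at this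
    exact this
  have : ⟪q, y₁⟫_ℝ ≤ 1 := by
    have e1 : ⟪q, y₁⟫_ℝ = ⟪y₁, q⟫_ℝ := real_inner_comm _ _
    rw [e1, hy₁, inner_sub_smul_expand, hy, inner_sub_smul_expand, hwq, mul_zero,
      mul_zero, sub_zero, sub_zero]
    exact hxq
  linarith

/-- the tubular polytope `P(W, w)` is the union of the translates of
`P(W)` by `λ • w` for `λ ∈ [0,1]`. -/
theorem tube_is_tube (d : ℕ) (R : ℝ) (Q : Finset (E d)) (hQ : IsQuasistable d R Q)
    (W : Set (E d)) (hW : W ⊆ (Q : Set (E d))) (w : E d) (hw : w ∈ LR d R)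
    (hperp : ∀ u ∈ W, ⟪w, u⟫_ℝ = 0) :
    polyPw d Q W w = ⋃ lam ∈ Set.Icc (0 : ℝ) 1, (fun x => x + lam • w) '' polyP d Q W := by
  ext x
  simp only [Set.mem_iUnion, Set.mem_image, Set.mem_Icc, exists_prop]
  constructor
  · intro hx
    classical
    set A := Q.filter (fun u => 0 < ⟪w, u⟫_ℝ) with hA
    set Ta := insert (0 : ℝ) (A.image fun u => (⟪x, u⟫_ℝ - 1) / ⟪w, u⟫_ℝ) with hTa
    have hTane : Ta.Nonempty := ⟨0, Finset.mem_insert_self _ _⟩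
    set a := Ta.max' hTane with ha
    have ha0 : 0 ≤ a := Finset.le_max' _ 0 (Finset.mem_insert_self _ _)
    -- every element of Ta is ≤ 1
    have hTa1 : ∀ r ∈ Ta, r ≤ 1 := by
      intro r hr
      rcases Finset.mem_insert.mp hr with rfl | hr
      · norm_num
      · obtain ⟨u, hu, rfl⟩ := Finset.mem_image.mp hr
        obtain ⟨huQ, hwu⟩ := Finset.mem_filter.mp hu
        have huw : 0 ≤ ⟪u, w⟫_ℝ := by rw [real_inner_comm]; exact le_of_lt hwu
        have := hx.1 u huQ
        rw [if_pos huw, inner_sub_left] at this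
        rw [div_le_one hwu]
        linarith
    have ha1 : a ≤ 1 := Finset.max'_le _ _ _ hTa1
    -- a is below all the upper bounds
    have hab : ∀ v ∈ Q, ⟪w, v⟫_ℝ < 0 → a ≤ (⟪x, v⟫_ℝ - 1) / ⟪w, v⟫_ℝ := by
      intro v hv hwv
      apply Finset.max'_le
      intro r hr
      rcases Finset.mem_insert.mp hr with rfl | hr
      · -- 0 ≤ bv
        have hvw : ¬ 0 ≤ ⟪v, w⟫_ℝ := by
          rw [real_inner_comm]; exact not_le.mpr hwv
        have := hx.1 v hv
        rw [if_neg hvw, sub_zero] at this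
        rw [div_nonneg_iff]
        exact Or.inr ⟨by linarith, le_of_lt hwv⟩
      · obtain ⟨u, hu, rfl⟩ := Finset.mem_image.mp hr
        obtain ⟨huQ, hwu⟩ := Finset.mem_filter.mp hu
        exact tube_key d R Q hQ W w hw x hx u huQ v hv hwu hwv
    refine ⟨a, ⟨ha0, ha1⟩, x - a • w, ?_, by abel⟩
    constructor
    · intro u hu
      rcases lt_trichotomy (⟪w, u⟫_ℝ) 0 with hwu | hwu | hwu
      · have h1 : ⟪x, u⟫_ℝ - 1 ≤ a * ⟪w, u⟫_ℝ :=
          (le_div_iff_of_neg hwu).mp (hab u hu hwu)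
        rw [inner_sub_smul_expand]; linarith
      · have huw : 0 ≤ ⟪u, w⟫_ℝ := by rw [real_inner_comm, hwu]
        have := hx.1 u hu
        rw [if_pos huw, inner_sub_left, hwu] at this
        rw [inner_sub_smul_expand, hwu, mul_zero, sub_zero]
        linarith
      · have hmem : (⟪x, u⟫_ℝ - 1) / ⟪w, u⟫_ℝ ∈ Ta := by
          apply Finset.mem_insert_of_mem
          exact Finset.mem_image.mpr ⟨u, Finset.mem_filter.mpr ⟨hu, hwu⟩, rfl⟩
        have h1 : (⟪x, u⟫_ℝ - 1) / ⟪w, u⟫_ℝ ≤ a := Finset.le_max' _ _ hmem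
        have h2 : ⟪x, u⟫_ℝ - 1 ≤ a * ⟪w, u⟫_ℝ := (div_le_iff₀ hwu).mp h1
        rw [inner_sub_smul_expand]; linarith
    · intro u hu
      have hwu : ⟪w, u⟫_ℝ = 0 := hperp u hu
      have huw : 0 ≤ ⟪u, w⟫_ℝ := by rw [real_inner_comm, hwu]
      have := hx.2 u hu
      rw [if_pos huw, inner_sub_left, hwu] at this
      rw [inner_sub_smul_expand, hwu, mul_zero, sub_zero]
      linarith
  · rintro ⟨lam, ⟨hl0, hl1⟩, y, hy, rfl⟩
    constructor
    · intro u hu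
      by_cases h : 0 ≤ ⟪u, w⟫_ℝ
      · rw [if_pos h, inner_sub_left, inner_add_left, real_inner_smul_left]
        have h1 : ⟪y, u⟫_ℝ ≤ 1 := hy.1 u hu
        have h2 : 0 ≤ ⟪w, u⟫_ℝ := by rw [real_inner_comm]; exact h
        nlinarith
      · rw [if_neg h, sub_zero, inner_add_left, real_inner_smul_left]
        have h1 : ⟪y, u⟫_ℝ ≤ 1 := hy.1 u hu
        have h2 : ⟪w, u⟫_ℝ ≤ 0 := by
          rw [real_inner_comm]; exact le_of_lt (not_le.mp h)
        nlinarith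
    · intro u hu
      have hwu : ⟪w, u⟫_ℝ = 0 := hperp u hu
      have huw : 0 ≤ ⟪u, w⟫_ℝ := by rw [real_inner_comm, hwu]
      rw [if_pos huw, inner_sub_left, inner_add_left, real_inner_smul_left, hwu]
      have := hy.2 u hu
      rw [this]; ring

end BootstrapU

end
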